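/- Let B^k be the set of sequences (i₁,…,i_k) from J = {±1,…,±n} (type C_n, so condition: i_ν ≺ i_{ν+1} strictly for all ν, in the order 1 ≺ ⋯ ≺ n ≺ −n ≺ ⋯ ≺ −1) satisfying the additional condition: if i_s = p and i_t = −p (for some 1 ≤ s < t ≤ k and 1 ≤ p ≤ n) then s + (k − t + 1) ≤ p. Then the cardinality of B^k equals binom(2n, k) − binom(2n, k−2). -/

import Mathlib

/-- position of `j` in the order `1 ≺ 2 ≺ ⋯ ≺ n ≺ −n ≺ ⋯ ≺ −1`. -/
def ord (n j : ℤ) : ℤ := if 0 < j then j else 2 * n + 1 + j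
/-- `binom(2n, m)` with the convention that it vanishes for `m < 0`. -/
def c (n : ℕ) (m : ℤ) : ℤ := if m < 0 then 0 else Nat.choose (2*n) m.toNat

/-- Kashiwara–Nakashima columns of height `k` for type `C_n` -/
def KNColumn (n k : ℕ) (s : Fin k → ℤ) : Prop :=
  (∀ ν : Fin k, 1 ≤ |s ν| ∧ |s ν| ≤ n) ∧
  (∀ ν : Fin k, (h : ν.val + 1 < k) → ord n (s ν) < ord n (s ⟨ν.val + 1, h⟩)) ∧
  (∀ st tt : Fin k, ∀ p : ℤ, 1 ≤ p → p ≤ n → st.val < tt.val → s st = p → s tt = -p →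
      ((st.val : ℤ) + 1) + ((k : ℤ) - ((tt.val : ℤ) + 1) + 1) ≤ p)

open Finset

def admCond (x : Finset ℤ × Finset ℤ) : Prop :=
  ∀ p ∈ x.1 ∩ x.2, ((x.1 ∩ Finset.Icc 1 p).card : ℤ) + ((x.2 ∩ Finset.Icc 1 p).card : ℤ) ≤ p

open Classical in
noncomputable def adm (n k : ℕ) : Finset (Finset ℤ × Finset ℤ) :=
  ((Finset.Icc (1:ℤ) n).powerset ×ˢ (Finset.Icc (1:ℤ) n).powerset).filter
    (fun x => x.1.card + x.2.card = k ∧ admCond x)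

lemma mem_adm {n k : ℕ} {x : Finset ℤ × Finset ℤ} :
    x ∈ adm n k ↔ x.1 ⊆ Finset.Icc (1:ℤ) n ∧ x.2 ⊆ Finset.Icc (1:ℤ) n ∧
      x.1.card + x.2.card = k ∧ admCond x := by
  classical
  simp only [adm, Finset.mem_filter, Finset.mem_product, Finset.mem_powerset]
  tauto

-- helpers
lemma insert_inter_Icc {P : Finset ℤ} {a p : ℤ} (h : p < a) :
    (insert a P) ∩ Finset.Icc 1 p = P ∩ Finset.Icc 1 p := by
  ext y
  simp only [Finset.mem_inter, Finset.mem_insert, Finset.mem_Icc]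
  constructor
  · rintro ⟨h1 | h1, h2⟩
    · omega
    · exact ⟨h1, h2⟩
  · rintro ⟨h1, h2⟩; exact ⟨Or.inr h1, h2⟩

lemma erase_inter_Icc {P : Finset ℤ} {a p : ℤ} (h : p < a) :
    (P.erase a) ∩ Finset.Icc 1 p = P ∩ Finset.Icc 1 p := by
  ext y
  simp only [Finset.mem_inter, Finset.mem_erase, Finset.mem_Icc]
  constructor
  · rintro ⟨⟨_, h1⟩, h2⟩; exact ⟨h1, h2⟩
  · rintro ⟨h1, h2⟩; exact ⟨⟨by omega, h1⟩, h2⟩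

lemma subset_Icc_succ_not_mem {P : Finset ℤ} {n : ℕ}
    (h : P ⊆ Finset.Icc (1:ℤ) (n+1)) (h2 : ((n:ℤ)+1) ∉ P) : P ⊆ Finset.Icc (1:ℤ) n := by
  intro y hy
  have := Finset.mem_Icc.mp (h hy)
  rw [Finset.mem_Icc]
  have : y ≠ (n:ℤ)+1 := fun hc => h2 (hc ▸ hy)
  omega

lemma subset_Icc_succ {P : Finset ℤ} {n : ℕ}
    (h : P ⊆ Finset.Icc (1:ℤ) n) : P ⊆ Finset.Icc (1:ℤ) (n+1) := by
  intro y hy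
  have := Finset.mem_Icc.mp (h hy)
  rw [Finset.mem_Icc]; push_cast; omega

lemma not_mem_of_subset_Icc {P : Finset ℤ} {n : ℕ}
    (h : P ⊆ Finset.Icc (1:ℤ) n) : ((n:ℤ)+1) ∉ P := by
  intro hc
  have := Finset.mem_Icc.mp (h hc)
  omega

lemma part00 {n k : ℕ} :
    (adm (n+1) k).filter (fun x => ¬((n:ℤ)+1) ∈ x.1 ∧ ¬((n:ℤ)+1) ∈ x.2) = adm n k := by
  ext x
  simp only [Finset.mem_filter, mem_adm]
  constructor
  · rintro ⟨⟨h1, h2, h3, h4⟩, h5, h6⟩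
    push_cast at h1 h2
    exact ⟨subset_Icc_succ_not_mem h1 h5, subset_Icc_succ_not_mem h2 h6, h3, h4⟩
  · rintro ⟨h1, h2, h3, h4⟩
    refine ⟨⟨?_, ?_, h3, h4⟩, not_mem_of_subset_Icc h1, not_mem_of_subset_Icc h2⟩
    · push_cast; exact subset_Icc_succ h1
    · push_cast; exact subset_Icc_succ h2

lemma part10 {n k : ℕ} :
    ((adm (n+1) (k+1)).filter (fun x => ((n:ℤ)+1) ∈ x.1 ∧ ¬((n:ℤ)+1) ∈ x.2)).card
      = (adm n k).card := by
  apply Finset.card_nbij' (fun x => (x.1.erase ((n:ℤ)+1), x.2))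
    (fun x => (insert ((n:ℤ)+1) x.1, x.2))
  · rintro ⟨P, N⟩ hx
    simp only [Finset.mem_coe, Finset.mem_filter, mem_adm] at hx ⊢
    obtain ⟨⟨h1, h2, h3, h4⟩, h5, h6⟩ := hx
    push_cast at h1 h2
    refine ⟨subset_Icc_succ_not_mem (fun y hy => h1 (Finset.erase_subset _ _ hy))
        (fun hc => (Finset.mem_erase.mp hc).1 rfl),
      subset_Icc_succ_not_mem h2 h6, ?_, ?_⟩
    · have e1 := Finset.card_erase_of_mem h5
      have e2 : 0 < P.card := Finset.card_pos.mpr ⟨_, h5⟩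
      omega
    · intro p hp
      rw [Finset.mem_inter] at hp
      have hpN := Finset.mem_Icc.mp (h2 hp.2)
      have hlt : p < (n:ℤ)+1 := by
        have : p ≠ (n:ℤ)+1 := fun hc => h6 (hc ▸ hp.2)
        omega
      rw [erase_inter_Icc hlt]
      exact h4 p (Finset.mem_inter.mpr ⟨Finset.erase_subset _ _ hp.1, hp.2⟩)
  · rintro ⟨P, N⟩ hx
    simp only [Finset.mem_coe, Finset.mem_filter, mem_adm] at hx ⊢
    obtain ⟨h1, h2, h3, h4⟩ := hx
    have hPn : ((n:ℤ)+1) ∉ P := not_mem_of_subset_Icc h1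
    refine ⟨⟨?_, ?_, ?_, ?_⟩, Finset.mem_insert_self _ _, not_mem_of_subset_Icc h2⟩
    · push_cast
      intro y hy
      rcases Finset.mem_insert.mp hy with h | h
      · rw [Finset.mem_Icc]; omega
      · exact subset_Icc_succ h1 h
    · push_cast; exact subset_Icc_succ h2
    · rw [Finset.card_insert_of_notMem hPn]; omega
    · intro p hp
      rw [Finset.mem_inter, Finset.mem_insert] at hp
      have hpN := Finset.mem_Icc.mp (h2 hp.2)
      have hlt : p < (n:ℤ)+1 := by
        rcases hp.1 with h | h
        · omega
        · omega
      rcases hp.1 with h | h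
      · omega
      · rw [insert_inter_Icc hlt]
        exact h4 p (Finset.mem_inter.mpr ⟨h, hp.2⟩)
  · rintro ⟨P, N⟩ hx
    simp only [Finset.mem_coe, Finset.mem_filter] at hx
    dsimp only
    rw [Finset.insert_erase hx.2.1]
  · rintro ⟨P, N⟩ hx
    simp only [Finset.mem_coe, mem_adm] at hx
    dsimp only
    rw [Finset.erase_insert (not_mem_of_subset_Icc hx.1)]

lemma part01 {n k : ℕ} :
    ((adm (n+1) (k+1)).filter (fun x => ¬((n:ℤ)+1) ∈ x.1 ∧ ((n:ℤ)+1) ∈ x.2)).card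
      = (adm n k).card := by
  apply Finset.card_nbij' (fun x => (x.1, x.2.erase ((n:ℤ)+1)))
    (fun x => (x.1, insert ((n:ℤ)+1) x.2))
  · rintro ⟨P, N⟩ hx
    simp only [Finset.mem_coe, Finset.mem_filter, mem_adm] at hx ⊢
    obtain ⟨⟨h1, h2, h3, h4⟩, h5, h6⟩ := hx
    push_cast at h1 h2
    refine ⟨subset_Icc_succ_not_mem h1 h5,
      subset_Icc_succ_not_mem (fun y hy => h2 (Finset.erase_subset _ _ hy))
        (fun hc => (Finset.mem_erase.mp hc).1 rfl), ?_, ?_⟩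
    · have e1 := Finset.card_erase_of_mem h6
      have e2 : 0 < N.card := Finset.card_pos.mpr ⟨_, h6⟩
      omega
    · intro p hp
      rw [Finset.mem_inter] at hp
      have hpP := Finset.mem_Icc.mp (h1 hp.1)
      have hlt : p < (n:ℤ)+1 := by
        have : p ≠ (n:ℤ)+1 := fun hc => h5 (hc ▸ hp.1)
        omega
      rw [erase_inter_Icc hlt]
      exact h4 p (Finset.mem_inter.mpr ⟨hp.1, Finset.erase_subset _ _ hp.2⟩)
  · rintro ⟨P, N⟩ hx
    simp only [Finset.mem_coe, Finset.mem_filter, mem_adm] at hx ⊢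
    obtain ⟨h1, h2, h3, h4⟩ := hx
    have hNn : ((n:ℤ)+1) ∉ N := not_mem_of_subset_Icc h2
    refine ⟨⟨?_, ?_, ?_, ?_⟩, not_mem_of_subset_Icc h1, Finset.mem_insert_self _ _⟩
    · push_cast; exact subset_Icc_succ h1
    · push_cast
      intro y hy
      rcases Finset.mem_insert.mp hy with h | h
      · rw [Finset.mem_Icc]; omega
      · exact subset_Icc_succ h2 h
    · rw [Finset.card_insert_of_notMem hNn]; omega
    · intro p hp
      rw [Finset.mem_inter, Finset.mem_insert] at hp
      have hpP := Finset.mem_Icc.mp (h1 hp.1)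
      have hlt : p < (n:ℤ)+1 := by omega
      rcases hp.2 with h | h
      · omega
      · rw [insert_inter_Icc hlt]
        exact h4 p (Finset.mem_inter.mpr ⟨hp.1, h⟩)
  · rintro ⟨P, N⟩ hx
    simp only [Finset.mem_coe, Finset.mem_filter] at hx
    dsimp only
    rw [Finset.insert_erase hx.2.2]
  · rintro ⟨P, N⟩ hx
    simp only [Finset.mem_coe, mem_adm] at hx
    dsimp only
    rw [Finset.erase_insert (not_mem_of_subset_Icc hx.2.1)]

lemma part11 {n k : ℕ} (hkn : k + 2 ≤ n + 1) :
    ((adm (n+1) (k+2)).filter (fun x => ((n:ℤ)+1) ∈ x.1 ∧ ((n:ℤ)+1) ∈ x.2)).card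
      = (adm n k).card := by
  apply Finset.card_nbij' (fun x => (x.1.erase ((n:ℤ)+1), x.2.erase ((n:ℤ)+1)))
    (fun x => (insert ((n:ℤ)+1) x.1, insert ((n:ℤ)+1) x.2))
  · rintro ⟨P, N⟩ hx
    simp only [Finset.mem_coe, Finset.mem_filter, mem_adm] at hx ⊢
    obtain ⟨⟨h1, h2, h3, h4⟩, h5, h6⟩ := hx
    push_cast at h1 h2
    refine ⟨subset_Icc_succ_not_mem (fun y hy => h1 (Finset.erase_subset _ _ hy))
        (fun hc => (Finset.mem_erase.mp hc).1 rfl),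
      subset_Icc_succ_not_mem (fun y hy => h2 (Finset.erase_subset _ _ hy))
        (fun hc => (Finset.mem_erase.mp hc).1 rfl), ?_, ?_⟩
    · have e1 := Finset.card_erase_of_mem h5
      have e2 : 0 < P.card := Finset.card_pos.mpr ⟨_, h5⟩
      have e3 := Finset.card_erase_of_mem h6
      have e4 : 0 < N.card := Finset.card_pos.mpr ⟨_, h6⟩
      omega
    · intro p hp
      rw [Finset.mem_inter, Finset.mem_erase, Finset.mem_erase] at hp
      have hlt : p < (n:ℤ)+1 := by
        have := Finset.mem_Icc.mp (h1 hp.1.2)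
        have := hp.1.1
        omega
      rw [erase_inter_Icc hlt, erase_inter_Icc hlt]
      exact h4 p (Finset.mem_inter.mpr ⟨hp.1.2, hp.2.2⟩)
  · rintro ⟨P, N⟩ hx
    simp only [Finset.mem_coe, Finset.mem_filter, mem_adm] at hx ⊢
    obtain ⟨h1, h2, h3, h4⟩ := hx
    have hPn : ((n:ℤ)+1) ∉ P := not_mem_of_subset_Icc h1
    have hNn : ((n:ℤ)+1) ∉ N := not_mem_of_subset_Icc h2
    have hP' : insert ((n:ℤ)+1) P ⊆ Finset.Icc (1:ℤ) (n+1) := by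
      intro y hy
      rcases Finset.mem_insert.mp hy with h | h
      · rw [Finset.mem_Icc]; omega
      · exact subset_Icc_succ h1 h
    have hN' : insert ((n:ℤ)+1) N ⊆ Finset.Icc (1:ℤ) (n+1) := by
      intro y hy
      rcases Finset.mem_insert.mp hy with h | h
      · rw [Finset.mem_Icc]; omega
      · exact subset_Icc_succ h2 h
    refine ⟨⟨?_, ?_, ?_, ?_⟩, Finset.mem_insert_self _ _, Finset.mem_insert_self _ _⟩
    · push_cast; exact hP'
    · push_cast; exact hN'
    · rw [Finset.card_insert_of_notMem hPn, Finset.card_insert_of_notMem hNn]; omega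
    · intro p hp
      rw [Finset.mem_inter, Finset.mem_insert, Finset.mem_insert] at hp
      rcases eq_or_ne p ((n:ℤ)+1) with hpn | hpn
      · subst hpn
        have i1 : insert ((n:ℤ)+1) P ∩ Finset.Icc 1 ((n:ℤ)+1) = insert ((n:ℤ)+1) P :=
          Finset.inter_eq_left.mpr hP'
        have i2 : insert ((n:ℤ)+1) N ∩ Finset.Icc 1 ((n:ℤ)+1) = insert ((n:ℤ)+1) N :=
          Finset.inter_eq_left.mpr hN'
        rw [i1, i2, Finset.card_insert_of_notMem hPn, Finset.card_insert_of_notMem hNn]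
        push_cast; omega
      · have hpP : p ∈ P := by
          rcases hp.1 with h | h
          · exact absurd h hpn
          · exact h
        have hpN : p ∈ N := by
          rcases hp.2 with h | h
          · exact absurd h hpn
          · exact h
        have hlt : p < (n:ℤ)+1 := by
          have := Finset.mem_Icc.mp (h1 hpP)
          omega
        rw [insert_inter_Icc hlt, insert_inter_Icc hlt]
        exact h4 p (Finset.mem_inter.mpr ⟨hpP, hpN⟩)
  · rintro ⟨P, N⟩ hx
    simp only [Finset.mem_coe, Finset.mem_filter] at hx
    dsimp only
    rw [Finset.insert_erase hx.2.1, Finset.insert_erase hx.2.2]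
  · rintro ⟨P, N⟩ hx
    simp only [Finset.mem_coe, mem_adm] at hx
    dsimp only
    rw [Finset.erase_insert (not_mem_of_subset_Icc hx.1),
      Finset.erase_insert (not_mem_of_subset_Icc hx.2.1)]

lemma adm_eq_empty {n k : ℕ} (h : n < k) : adm n k = ∅ := by
  classical
  rw [Finset.eq_empty_iff_forall_notMem]
  rintro ⟨P, N⟩ hx
  rw [mem_adm] at hx
  obtain ⟨hP, hN, hcard, hadm⟩ := hx
  simp only [admCond] at hadm
  dsimp only at hP hN hcard hadm
  -- the set of violating p
  set T : Finset ℤ := (Finset.Icc (1:ℤ) n).filter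
    (fun p => (p : ℤ) < ((P ∩ Finset.Icc 1 p).card : ℤ) + ((N ∩ Finset.Icc 1 p).card : ℤ)) with hT
  have hn0 : 0 < n := by
    by_contra h0
    push_neg at h0
    interval_cases n
    · simp at hP hN
      subst hP; subst hN
      simp at hcard
      omega
  have hnT : (n : ℤ) ∈ T := by
    have h1 : P ∩ Finset.Icc 1 (n:ℤ) = P := Finset.inter_eq_left.mpr hP
    have h2 : N ∩ Finset.Icc 1 (n:ℤ) = N := Finset.inter_eq_left.mpr hN
    simp only [hT, Finset.mem_filter, h1, h2]
    constructor
    · simp [Finset.mem_Icc]; exact_mod_cast hn0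
    · push_cast; omega
  have hTne : T.Nonempty := ⟨_, hnT⟩
  set p := T.min' hTne with hp
  have hpT : p ∈ T := T.min'_mem hTne
  have hpIcc : p ∈ Finset.Icc (1:ℤ) n := (Finset.mem_filter.mp hpT).1
  have hpviol : (p : ℤ) < ((P ∩ Finset.Icc 1 p).card : ℤ) + ((N ∩ Finset.Icc 1 p).card : ℤ) :=
    (Finset.mem_filter.mp hpT).2
  have hp1 : 1 ≤ p := (Finset.mem_Icc.mp hpIcc).1
  -- the previous level is fine
  have hprev : ((P ∩ Finset.Icc 1 (p-1)).card : ℤ) + ((N ∩ Finset.Icc 1 (p-1)).card : ℤ) ≤ p - 1 := by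
    rcases eq_or_lt_of_le hp1 with h1 | h1
    · have : Finset.Icc (1:ℤ) (p-1) = ∅ := by
        apply Finset.Icc_eq_empty; omega
      simp [this]; omega
    · by_contra hcon
      push_neg at hcon
      have : p - 1 ∈ T := by
        simp only [hT, Finset.mem_filter, Finset.mem_Icc]
        refine ⟨⟨by omega, by have := (Finset.mem_Icc.mp hpIcc).2; omega⟩, hcon⟩
      have := T.min'_le _ this
      omega
  -- Icc 1 p ⊆ insert p (Icc 1 (p-1))
  have hsub : Finset.Icc (1:ℤ) p ⊆ insert p (Finset.Icc 1 (p-1)) := by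
    intro y hy
    rw [Finset.mem_Icc] at hy
    rcases eq_or_lt_of_le hy.2 with h | h
    · exact Finset.mem_insert.mpr (Or.inl h)
    · exact Finset.mem_insert.mpr (Or.inr (Finset.mem_Icc.mpr ⟨hy.1, by omega⟩))
  have keyP : ∀ (S : Finset ℤ), (S ∩ Finset.Icc 1 p).card ≤ (S ∩ Finset.Icc 1 (p-1)).card + 1 ∧
      (p ∉ S → (S ∩ Finset.Icc 1 p).card ≤ (S ∩ Finset.Icc 1 (p-1)).card) := by
    intro S
    constructor
    · have : S ∩ Finset.Icc 1 p ⊆ insert p (S ∩ Finset.Icc 1 (p-1)) := by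
        intro y hy
        rw [Finset.mem_inter] at hy
        rcases Finset.mem_insert.mp (hsub hy.2) with h | h
        · exact Finset.mem_insert.mpr (Or.inl h)
        · exact Finset.mem_insert.mpr (Or.inr (Finset.mem_inter.mpr ⟨hy.1, h⟩))
      calc (S ∩ Finset.Icc 1 p).card ≤ (insert p (S ∩ Finset.Icc 1 (p-1))).card :=
            Finset.card_le_card this
        _ ≤ (S ∩ Finset.Icc 1 (p-1)).card + 1 := Finset.card_insert_le _ _
    · intro hnS
      apply Finset.card_le_card
      intro y hy
      rw [Finset.mem_inter] at hy
      rcases Finset.mem_insert.mp (hsub hy.2) with h | h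
      · exact absurd (h ▸ hy.1) hnS
      · exact Finset.mem_inter.mpr ⟨hy.1, h⟩
  have hPin : p ∈ P := by
    by_contra hc
    have := (keyP P).2 hc
    have := (keyP N).1
    omega
  have hNin : p ∈ N := by
    by_contra hc
    have := (keyP N).2 hc
    have := (keyP P).1
    omega
  have := hadm p (Finset.mem_inter.mpr ⟨hPin, hNin⟩)
  omega

open Classical in
lemma adm_split {n k : ℕ} :
    (adm (n+1) k).card =
      ((adm (n+1) k).filter (fun x => ¬((n:ℤ)+1) ∈ x.1 ∧ ¬((n:ℤ)+1) ∈ x.2)).card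
      + ((adm (n+1) k).filter (fun x => ((n:ℤ)+1) ∈ x.1 ∧ ¬((n:ℤ)+1) ∈ x.2)).card
      + ((adm (n+1) k).filter (fun x => ¬((n:ℤ)+1) ∈ x.1 ∧ ((n:ℤ)+1) ∈ x.2)).card
      + ((adm (n+1) k).filter (fun x => ((n:ℤ)+1) ∈ x.1 ∧ ((n:ℤ)+1) ∈ x.2)).card := by
  classical
  rw [Finset.card_filter, Finset.card_filter, Finset.card_filter, Finset.card_filter,
    ← Finset.sum_add_distrib, ← Finset.sum_add_distrib, ← Finset.sum_add_distrib]
  rw [Finset.card_eq_sum_ones]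
  apply Finset.sum_congr rfl
  intro x _
  by_cases h1 : ((n:ℤ)+1) ∈ x.1 <;> by_cases h2 : ((n:ℤ)+1) ∈ x.2 <;> simp [h1, h2]

lemma adm_zero (n : ℕ) : (adm n 0).card = 1 := by
  classical
  have : adm n 0 = {(∅, ∅)} := by
    ext ⟨P, N⟩
    simp only [mem_adm, Finset.mem_singleton, Prod.mk.injEq]
    constructor
    · rintro ⟨_, _, h3, _⟩
      have hP : P = ∅ := Finset.card_eq_zero.mp (by omega)
      have hN : N = ∅ := Finset.card_eq_zero.mp (by omega)
      exact ⟨hP, hN⟩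
    · rintro ⟨rfl, rfl⟩
      refine ⟨by simp, by simp, by simp, ?_⟩
      intro p hp
      simp at hp
  rw [this, Finset.card_singleton]

lemma adm_rec2 {n k : ℕ} (h : k + 2 ≤ n + 1) :
    (adm (n+1) (k+2)).card
      = (adm n (k+2)).card + (adm n (k+1)).card + (adm n (k+1)).card + (adm n k).card := by
  rw [adm_split, part00, part11 h]
  rw [show k + 2 = (k+1) + 1 from rfl, part10, part01]

lemma adm_rec1 {n : ℕ} :
    (adm (n+1) 1).card = (adm n 1).card + (adm n 0).card + (adm n 0).card := by
  classical
  have h11 : ((adm (n+1) 1).filter (fun x => ((n:ℤ)+1) ∈ x.1 ∧ ((n:ℤ)+1) ∈ x.2)) = ∅ := by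
    rw [Finset.eq_empty_iff_forall_notMem]
    rintro ⟨P, N⟩ hx
    rw [Finset.mem_filter, mem_adm] at hx
    obtain ⟨⟨_, _, h3, _⟩, h5, h6⟩ := hx
    dsimp only at h3
    have e1 : 0 < P.card := Finset.card_pos.mpr ⟨_, h5⟩
    have e2 : 0 < N.card := Finset.card_pos.mpr ⟨_, h6⟩
    omega
  rw [adm_split, part00, h11]
  rw [show (1:ℕ) = 0 + 1 from rfl, part10, part01]
  simp

lemma c_ofNat (n j : ℕ) : c n (j : ℤ) = ((2*n).choose j : ℤ) := by
  simp [c]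

lemma c_neg {n : ℕ} {m : ℤ} (h : m < 0) : c n m = 0 := by
  simp [c, h]

lemma pascal2 (n k : ℕ) : c (n+1) (k : ℤ) = c n (k:ℤ) + 2 * c n ((k:ℤ)-1) + c n ((k:ℤ)-2) := by
  match k with
  | 0 => norm_num [c]
  | 1 =>
    have : ((1:ℕ):ℤ) - 1 = ((0:ℕ):ℤ) := by norm_num
    rw [c_ofNat, c_ofNat, this, c_ofNat, c_neg (by norm_num)]
    simp [Nat.choose_one_right]
    ring
  | (j+2) =>
    have e1 : ((j+2:ℕ):ℤ) - 1 = ((j+1:ℕ):ℤ) := by push_cast; ring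
    have e2 : ((j+2:ℕ):ℤ) - 2 = ((j:ℕ):ℤ) := by push_cast; ring
    rw [c_ofNat, c_ofNat, e1, e2, c_ofNat, c_ofNat]
    have : 2*(n+1) = (2*n+1)+1 := by ring
    rw [this]
    rw [Nat.choose_succ_succ (2*n+1) (j+1), Nat.choose_succ_succ (2*n) j,
      Nat.choose_succ_succ (2*n) (j+1)]
    push_cast
    ring

lemma adm_card : ∀ n : ℕ, ∀ k : ℕ, k ≤ n + 1 →
    ((adm n k).card : ℤ) = c n (k : ℤ) - c n ((k:ℤ)-2) := by
  intro n
  induction n with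
  | zero =>
    intro k hk
    interval_cases k
    · rw [adm_zero, c_ofNat, c_neg (by norm_num)]
      simp
    · rw [adm_eq_empty (by norm_num), c_ofNat, c_neg (by norm_num)]
      simp
  | succ n ih =>
    intro k hk
    match k, hk with
    | 0, _ =>
      rw [adm_zero, c_ofNat, c_neg (by norm_num)]
      simp
    | 1, _ =>
      rw [adm_rec1]
      push_cast
      rw [ih 1 (by omega), ih 0 (by omega)]
      have v1 : c n ((1:ℕ):ℤ) = (((2*n):ℕ) : ℤ) := by rw [c_ofNat, Nat.choose_one_right]
      have v2 : c (n+1) (1:ℤ) = (((2*(n+1)):ℕ) : ℤ) := by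
        rw [show (1:ℤ) = ((1:ℕ):ℤ) by norm_num, c_ofNat, Nat.choose_one_right]
      have v3 : c n ((0:ℕ):ℤ) = 1 := by rw [c_ofNat, Nat.choose_zero_right]; norm_num
      rw [v1, v2, v3, c_neg (show ((1:ℕ):ℤ) - 2 < 0 by norm_num),
        c_neg (show ((0:ℕ):ℤ) - 2 < 0 by norm_num),
        c_neg (show (-1:ℤ) < 0 by norm_num)]
      push_cast
      ring
    | (j+2), hk =>
      rcases eq_or_lt_of_le hk with he | hlt
      · -- k = n + 2 : both sides vanish
        have hj : j = n := by omega
        subst hj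
        rw [adm_eq_empty (by omega)]
        have e2 : ((j+2:ℕ):ℤ) - 2 = ((j:ℕ):ℤ) := by push_cast; ring
        rw [e2, c_ofNat, c_ofNat]
        have : (2*(j+1)).choose (j+2) = (2*(j+1)).choose j := by
          apply Nat.choose_symm_of_eq_add
          ring
        rw [this]
        simp
      · have hle : j + 2 ≤ n + 1 := by omega
        rw [adm_rec2 hle]
        push_cast
        rw [ih (j+2) (by omega), ih (j+1) (by omega), ih j (by omega)]
        have e1 : ((j+1:ℕ):ℤ) - 2 = ((j:ℕ):ℤ) - 1 := by push_cast; ring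
        have e2 : ((j+2:ℕ):ℤ) - 2 = ((j:ℕ):ℤ) := by push_cast; ring
        have e5 : ((j:ℤ)+2) = ((j+2:ℕ):ℤ) := by push_cast; ring
        rw [e5, e1, e2, pascal2 n (j+2), e2]
        have e3 : ((j+2:ℕ):ℤ) - 1 = ((j+1:ℕ):ℤ) := by push_cast; ring
        rw [e3, pascal2 n j]
        ring

section encode
variable {n k : ℕ} {s : Fin k → ℤ}

def Pset (s : Fin k → ℤ) : Finset ℤ := (Finset.univ.image s).filter (fun x => 0 < x)
def Nset (s : Fin k → ℤ) : Finset ℤ :=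
  (Finset.univ.image (fun ν => -(s ν))).filter (fun x => 0 < x)

lemma mem_Pset {x : ℤ} : x ∈ Pset s ↔ (∃ ν, s ν = x) ∧ 0 < x := by
  simp [Pset]

lemma mem_Nset {x : ℤ} : x ∈ Nset s ↔ (∃ ν, s ν = -x) ∧ 0 < x := by
  simp only [Nset, Finset.mem_filter, Finset.mem_image, Finset.mem_univ, true_and]
  constructor
  · rintro ⟨⟨ν, hν⟩, h⟩; exact ⟨⟨ν, by omega⟩, h⟩
  · rintro ⟨⟨ν, hν⟩, h⟩; exact ⟨⟨ν, by omega⟩, h⟩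

/-- being in the alphabet, unfolded -/
lemma alpha {j : ℤ} (h : 1 ≤ |j| ∧ |j| ≤ (n:ℤ)) :
    (1 ≤ j ∧ j ≤ n) ∨ (-(n:ℤ) ≤ j ∧ j ≤ -1) := by
  rcases abs_cases j with ⟨he, h0⟩ | ⟨he, h0⟩ <;> rw [he] at h
  · left; omega
  · right; omega

lemma ord_of_pos {m j : ℤ} (h : 0 < j) : ord m j = j := if_pos h

lemma ord_of_neg {m j : ℤ} (h : j < 0) : ord m j = 2*m+1+j := if_neg (by omega)

-- hypotheses
variable (hS : ∀ ν : Fin k, (1 ≤ s ν ∧ s ν ≤ (n:ℤ)) ∨ (-(n:ℤ) ≤ s ν ∧ s ν ≤ -1))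
variable (hM : StrictMono (fun ν => ord n (s ν)))

include hS hM in
lemma cardP (st : Fin k) (h : 0 < s st) :
    ((Pset s) ∩ Finset.Icc 1 (s st)).card = st.val + 1 := by
  have hst : s st ≤ (n:ℤ) := by rcases hS st with h' | h' <;> omega
  have him : (Pset s) ∩ Finset.Icc 1 (s st) = (Finset.Iic st).image s := by
    ext x
    simp only [Finset.mem_inter, mem_Pset, Finset.mem_Icc, Finset.mem_image, Finset.mem_Iic]
    constructor
    · rintro ⟨⟨⟨ν, rfl⟩, hpos⟩, h1, h2⟩
      refine ⟨ν, ?_, rfl⟩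
      have : ord n (s ν) ≤ ord n (s st) := by
        rw [ord_of_pos hpos, ord_of_pos h]; exact h2
      exact hM.le_iff_le.mp this
    · rintro ⟨ν, hν, rfl⟩
      have hord : ord n (s ν) ≤ ord n (s st) := hM.le_iff_le.mpr hν
      have hpos : 0 < s ν := by
        rcases hS ν with h' | h'
        · omega
        · rw [ord_of_neg (by omega : s ν < 0), ord_of_pos h] at hord
          omega
      rw [ord_of_pos hpos, ord_of_pos h] at hord
      have : 1 ≤ s ν := by rcases hS ν with h' | h' <;> omega
      exact ⟨⟨⟨ν, rfl⟩, hpos⟩, this, hord⟩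
  rw [him, Finset.card_image_of_injective _ (fun a b hab => hM.injective (congrArg (ord n) hab)),
    Fin.card_Iic]

include hS hM in
lemma cardN (tt : Fin k) (h : s tt < 0) :
    ((Nset s) ∩ Finset.Icc 1 (-(s tt))).card = k - tt.val := by
  have htt : -(n:ℤ) ≤ s tt := by rcases hS tt with h' | h' <;> omega
  have him : (Nset s) ∩ Finset.Icc 1 (-(s tt)) = (Finset.Ici tt).image (fun ν => -(s ν)) := by
    ext x
    simp only [Finset.mem_inter, mem_Nset, Finset.mem_Icc, Finset.mem_image, Finset.mem_Ici]
    constructor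
    · rintro ⟨⟨⟨ν, hν⟩, hpos⟩, h1, h2⟩
      refine ⟨ν, ?_, by omega⟩
      have : ord n (s tt) ≤ ord n (s ν) := by
        rw [ord_of_neg h, ord_of_neg (by omega : s ν < 0)]; omega
      exact hM.le_iff_le.mp this
    · rintro ⟨ν, hν, rfl⟩
      have hord : ord n (s tt) ≤ ord n (s ν) := hM.le_iff_le.mpr hν
      have hneg : s ν < 0 := by
        rcases hS ν with h' | h'
        · rw [ord_of_neg h, ord_of_pos (by omega : (0:ℤ) < s ν)] at hord
          omega
        · omega
      rw [ord_of_neg h, ord_of_neg hneg] at hord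
      have : s ν ≤ -1 := by rcases hS ν with h' | h' <;> omega
      exact ⟨⟨⟨ν, by omega⟩, by omega⟩, by omega, by omega⟩
  rw [him, Finset.card_image_of_injective _
    (fun a b hab => hM.injective (congrArg (ord n) (neg_injective hab))),
    Fin.card_Ici]

include hS hM in
lemma cardPN : (Pset s).card + (Nset s).card = k := by
  classical
  have hP : Pset s = (Finset.univ.filter (fun ν => 0 < s ν)).image s := by
    ext x
    simp only [mem_Pset, Finset.mem_image, Finset.mem_filter, Finset.mem_univ, true_and]
    constructor
    · rintro ⟨⟨ν, rfl⟩, h⟩; exact ⟨ν, h, rfl⟩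
    · rintro ⟨ν, h, rfl⟩; exact ⟨⟨ν, rfl⟩, h⟩
  have hN : Nset s = (Finset.univ.filter (fun ν => ¬ 0 < s ν)).image (fun ν => -(s ν)) := by
    ext x
    simp only [mem_Nset, Finset.mem_image, Finset.mem_filter, Finset.mem_univ, true_and]
    constructor
    · rintro ⟨⟨ν, hν⟩, h⟩; exact ⟨ν, by omega, by omega⟩
    · rintro ⟨ν, h, rfl⟩
      have : s ν ≤ -1 := by rcases hS ν with h' | h' <;> omega
      exact ⟨⟨ν, by omega⟩, by omega⟩
  rw [hP, hN,
    Finset.card_image_of_injective _ (fun a b hab => hM.injective (congrArg (ord n) hab)),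
    Finset.card_image_of_injective _
      (fun a b hab => hM.injective (congrArg (ord n) (neg_injective hab)))]
  rw [Finset.card_filter_add_card_filter_not]
  simp

include hS in
lemma PsubIcc : Pset s ⊆ Finset.Icc (1:ℤ) n := by
  intro x hx
  rw [mem_Pset] at hx
  obtain ⟨⟨ν, rfl⟩, h⟩ := hx
  rw [Finset.mem_Icc]
  rcases hS ν with h' | h' <;> omega

include hS in
lemma NsubIcc : Nset s ⊆ Finset.Icc (1:ℤ) n := by
  intro x hx
  rw [mem_Nset] at hx
  obtain ⟨⟨ν, hν⟩, h⟩ := hx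
  rw [Finset.mem_Icc]
  rcases hS ν with h' | h' <;> omega

include hS hM in
lemma cond3_iff :
    (∀ st tt : Fin k, ∀ p : ℤ, 1 ≤ p → p ≤ n → st.val < tt.val → s st = p → s tt = -p →
        ((st.val : ℤ) + 1) + ((k : ℤ) - ((tt.val : ℤ) + 1) + 1) ≤ p)
      ↔ admCond (Pset s, Nset s) := by
  constructor
  · intro h3 p hp
    rw [Finset.mem_inter] at hp
    obtain ⟨hp1, hp2⟩ := hp
    rw [mem_Pset] at hp1
    rw [mem_Nset] at hp2
    obtain ⟨⟨st, hst⟩, hppos⟩ := hp1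
    obtain ⟨⟨tt, htt⟩, -⟩ := hp2
    have hpn : p ≤ (n:ℤ) := by rcases hS st with h' | h' <;> omega
    have hlt : st.val < tt.val := by
      have : ord n (s st) < ord n (s tt) := by
        rw [ord_of_pos (by omega : (0:ℤ) < s st), ord_of_neg (by omega : s tt < 0)]
        omega
      exact hM.lt_iff_lt.mp this
    have hineq := h3 st tt p (by omega) hpn hlt hst htt
    have c1 := cardP hS hM st (by omega)
    rw [hst] at c1
    have c2 := cardN hS hM tt (by omega)
    rw [htt, neg_neg] at c2
    have htk : tt.val < k := tt.2
    dsimp only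
    rw [c1, c2]
    push_cast [Nat.cast_sub (le_of_lt htk)]
    omega
  · intro hadm st tt p hp1 hpn hlt hst htt
    have hmem : p ∈ Pset s ∩ Nset s := by
      rw [Finset.mem_inter, mem_Pset, mem_Nset]
      exact ⟨⟨⟨st, hst⟩, by omega⟩, ⟨⟨tt, htt⟩, by omega⟩⟩
    have h := hadm p hmem
    have c1 := cardP hS hM st (by omega)
    rw [hst] at c1
    have c2 := cardN hS hM tt (by omega)
    rw [htt, neg_neg] at c2
    have htk : tt.val < k := tt.2
    dsimp only at h
    rw [c1, c2] at h
    push_cast [Nat.cast_sub (le_of_lt htk)] at h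
    omega

lemma hS_of_KN (h : KNColumn n k s) :
    ∀ ν : Fin k, (1 ≤ s ν ∧ s ν ≤ (n:ℤ)) ∨ (-(n:ℤ) ≤ s ν ∧ s ν ≤ -1) :=
  fun ν => alpha (h.1 ν)

lemma hM_of_KN (h : KNColumn n k s) : StrictMono (fun ν => ord n (s ν)) := by
  match k, s, h with
  | 0, s, h => intro a; exact absurd a.2 (by omega)
  | (m+1), s, h =>
    apply Fin.strictMono_iff_lt_succ.mpr
    intro i
    have hlt : (i.castSucc).val + 1 < m + 1 := by
      have : (i.castSucc).val = i.val := rfl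
      omega
    have h2 := h.2.1 i.castSucc hlt
    have heq : (⟨(i.castSucc).val + 1, hlt⟩ : Fin (m+1)) = i.succ := rfl
    rw [heq] at h2
    exact h2

include hS in
lemma imageOrd :
    Finset.univ.image (fun ν => ord n (s ν))
      = Pset s ∪ (Nset s).image (fun q => 2*(n:ℤ)+1-q) := by
  ext x
  simp only [Finset.mem_image, Finset.mem_univ, true_and, Finset.mem_union, mem_Pset, mem_Nset]
  constructor
  · rintro ⟨ν, rfl⟩
    rcases hS ν with h' | h'
    · left
      rw [ord_of_pos (by omega)]
      exact ⟨⟨ν, rfl⟩, by omega⟩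
    · right
      refine ⟨-(s ν), ⟨⟨ν, by omega⟩, by omega⟩, ?_⟩
      rw [ord_of_neg (by omega)]
      ring
  · rintro (⟨⟨ν, rfl⟩, h⟩ | ⟨q, ⟨⟨ν, hν⟩, hq⟩, rfl⟩)
    · exact ⟨ν, ord_of_pos h⟩
    · refine ⟨ν, ?_⟩
      rw [ord_of_neg (by omega)]
      omega

end encode

section mainbij
variable {n k : ℕ}

lemma mem_adm_of_KN {s : Fin k → ℤ} (h : KNColumn n k s) : (Pset s, Nset s) ∈ adm n k := by
  have hS := hS_of_KN h
  have hM := hM_of_KN h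
  exact mem_adm.mpr ⟨PsubIcc hS, NsubIcc hS, cardPN hS hM, (cond3_iff hS hM).mp h.2.2⟩

lemma ord_inj_alpha {a b : ℤ}
    (ha : (1 ≤ a ∧ a ≤ (n:ℤ)) ∨ (-(n:ℤ) ≤ a ∧ a ≤ -1))
    (hb : (1 ≤ b ∧ b ≤ (n:ℤ)) ∨ (-(n:ℤ) ≤ b ∧ b ≤ -1))
    (h : ord n a = ord n b) : a = b := by
  rcases ha with ha | ha <;> rcases hb with hb | hb <;>
    [rw [ord_of_pos (by omega), ord_of_pos (by omega)] at h;
     rw [ord_of_pos (by omega), ord_of_neg (by omega)] at h;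
     rw [ord_of_neg (by omega), ord_of_pos (by omega)] at h;
     rw [ord_of_neg (by omega), ord_of_neg (by omega)] at h] <;> omega

lemma KN_inj {s₁ s₂ : Fin k → ℤ} (h₁ : KNColumn n k s₁) (h₂ : KNColumn n k s₂)
    (hP : Pset s₁ = Pset s₂) (hN : Nset s₁ = Nset s₂) : s₁ = s₂ := by
  classical
  have hS₁ := hS_of_KN h₁
  have hM₁ := hM_of_KN h₁
  have hS₂ := hS_of_KN h₂
  have hM₂ := hM_of_KN h₂
  have hB : Finset.univ.image (fun ν => ord n (s₁ ν))
      = Finset.univ.image (fun ν => ord n (s₂ ν)) := by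
    rw [imageOrd hS₁, imageOrd hS₂, hP, hN]
  set B := Finset.univ.image (fun ν => ord n (s₁ ν)) with hBdef
  have hcard : B.card = k := by
    rw [hBdef, Finset.card_image_of_injective _ hM₁.injective, Finset.card_univ,
      Fintype.card_fin]
  have e₁ : (fun ν => ord n (s₁ ν)) = B.orderEmbOfFin hcard :=
    Finset.orderEmbOfFin_unique hcard
      (fun ν => Finset.mem_image_of_mem _ (Finset.mem_univ ν)) hM₁
  have e₂ : (fun ν => ord n (s₂ ν)) = B.orderEmbOfFin hcard :=
    Finset.orderEmbOfFin_unique hcard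
      (fun ν => hB ▸ Finset.mem_image_of_mem _ (Finset.mem_univ ν)) hM₂
  funext ν
  apply ord_inj_alpha (hS₁ ν) (hS₂ ν)
  rw [show ord n (s₁ ν) = B.orderEmbOfFin hcard ν from congrFun e₁ ν,
    show ord n (s₂ ν) = B.orderEmbOfFin hcard ν from congrFun e₂ ν]

lemma KN_surj {P N : Finset ℤ} (h : (P, N) ∈ adm n k) :
    ∃ s : Fin k → ℤ, KNColumn n k s ∧ Pset s = P ∧ Nset s = N := by
  classical
  rw [mem_adm] at h
  obtain ⟨hP, hN, hcard, hadm⟩ := h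
  dsimp only at hP hN hcard hadm
  set f : ℤ → ℤ := fun q => 2*(n:ℤ)+1-q with hf
  set B : Finset ℤ := P ∪ N.image f with hBdef
  have hfinj : Function.Injective f := fun a b hab => by simp [hf] at hab; omega
  have hPb : ∀ x ∈ P, 1 ≤ x ∧ x ≤ (n:ℤ) := fun x hx => Finset.mem_Icc.mp (hP hx)
  have hNb : ∀ x ∈ N, 1 ≤ x ∧ x ≤ (n:ℤ) := fun x hx => Finset.mem_Icc.mp (hN hx)
  have hdisj : Disjoint P (N.image f) := by
    rw [Finset.disjoint_left]
    intro x hx hx2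
    obtain ⟨q, hq, rfl⟩ := Finset.mem_image.mp hx2
    have ha := hPb _ hx
    have hb := hNb _ hq
    simp only [hf] at ha
    omega
  have hcardB : B.card = k := by
    rw [hBdef, Finset.card_union_of_disjoint hdisj, Finset.card_image_of_injective _ hfinj]
    exact hcard
  set e := B.orderEmbOfFin hcardB with he
  set s : Fin k → ℤ := fun ν => if e ν ≤ (n:ℤ) then e ν else e ν - (2*(n:ℤ)+1) with hs
  have hBmem : ∀ x ∈ B, (1 ≤ x ∧ x ≤ (n:ℤ) ∧ x ∈ P)
      ∨ ((n:ℤ)+1 ≤ x ∧ x ≤ 2*(n:ℤ) ∧ (2*(n:ℤ)+1-x) ∈ N) := by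
    intro x hx
    rcases Finset.mem_union.mp hx with hx | hx
    · have := hPb _ hx
      exact Or.inl ⟨this.1, this.2, hx⟩
    · obtain ⟨q, hq, rfl⟩ := Finset.mem_image.mp hx
      have := hNb _ hq
      right
      simp only [hf]
      refine ⟨by omega, by omega, ?_⟩
      rw [show 2*(n:ℤ)+1-(2*(n:ℤ)+1-q) = q by ring]
      exact hq
  have heB : ∀ ν, e ν ∈ B := fun ν => Finset.orderEmbOfFin_mem B hcardB ν
  have hfacts : ∀ ν : Fin k,
      ((1 ≤ s ν ∧ s ν ≤ (n:ℤ)) ∨ (-(n:ℤ) ≤ s ν ∧ s ν ≤ -1))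
      ∧ ord n (s ν) = e ν
      ∧ (0 < s ν → s ν ∈ P) ∧ (s ν < 0 → -(s ν) ∈ N) := by
    intro ν
    rcases hBmem _ (heB ν) with ⟨hx1, hx2, hx3⟩ | ⟨hx1, hx2, hx3⟩
    · have hsv : s ν = e ν := by
        rw [hs]; dsimp only; split_ifs with hsp <;> omega
      refine ⟨Or.inl (by omega), ?_, fun _ => hsv ▸ hx3, fun hc => by omega⟩
      rw [hsv, ord_of_pos (by omega)]
    · have hsv : s ν = e ν - (2*(n:ℤ)+1) := by
        rw [hs]; dsimp only; split_ifs with hsp <;> omega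
      refine ⟨Or.inr (by omega), ?_, fun hc => by omega, fun _ => ?_⟩
      · rw [hsv, ord_of_neg (by omega)]; ring
      · rw [show -(s ν) = 2*(n:ℤ)+1-(e ν) by omega]
        exact hx3
  have hS : ∀ ν : Fin k, (1 ≤ s ν ∧ s ν ≤ (n:ℤ)) ∨ (-(n:ℤ) ≤ s ν ∧ s ν ≤ -1) :=
    fun ν => (hfacts ν).1
  have hM : StrictMono (fun ν => ord n (s ν)) := by
    intro a b hab
    show ord (n:ℤ) (s a) < ord (n:ℤ) (s b)
    rw [(hfacts a).2.1, (hfacts b).2.1]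
    exact (B.orderEmbOfFin hcardB).strictMono hab
  -- the image of e is B
  have himage : Finset.univ.image e = B := by
    apply Finset.coe_injective
    rw [Finset.coe_image, Finset.coe_univ, Set.image_univ]
    exact Finset.range_orderEmbOfFin B hcardB
  have hPeq : Pset s = P := by
    ext x
    rw [mem_Pset]
    constructor
    · rintro ⟨⟨ν, rfl⟩, hpos⟩
      exact (hfacts ν).2.2.1 hpos
    · intro hx
      have hxB : x ∈ B := Finset.mem_union_left _ hx
      have : x ∈ Finset.univ.image e := himage ▸ hxB
      obtain ⟨ν, -, hν⟩ := Finset.mem_image.mp this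
      have h1 := hPb _ hx
      have hsv : s ν = x := by
        rw [hs]; dsimp only; rw [hν]; split_ifs with hsp <;> omega
      exact ⟨⟨ν, hsv⟩, by omega⟩
  have hNeq : Nset s = N := by
    ext x
    rw [mem_Nset]
    constructor
    · rintro ⟨⟨ν, hν⟩, hpos⟩
      have := (hfacts ν).2.2.2 (by omega)
      rw [hν] at this
      simpa using this
    · intro hx
      have hxB : f x ∈ B := Finset.mem_union_right _ (Finset.mem_image_of_mem f hx)
      have : f x ∈ Finset.univ.image e := himage ▸ hxB
      obtain ⟨ν, -, hν⟩ := Finset.mem_image.mp this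
      have h1 := hNb _ hx
      have hsv : s ν = -x := by
        rw [hs]; dsimp only; rw [hν]
        simp only [hf]
        split_ifs with hsp <;> omega
      exact ⟨⟨ν, hsv⟩, by omega⟩
  refine ⟨s, ⟨?_, ?_, ?_⟩, hPeq, hNeq⟩
  · intro ν
    rcases hS ν with h' | h'
    · rw [abs_of_pos (by omega)]; omega
    · rw [abs_of_neg (by omega)]; omega
  · intro ν hlt
    exact hM (show ν < ⟨ν.val + 1, hlt⟩ from by rw [Fin.lt_def]; simp)
  · apply (cond3_iff hS hM).mpr
    rw [show (Pset s, Nset s) = (P, N) from by rw [hPeq, hNeq]]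
    exact hadm
end mainbij

theorem stmt15 (n k : ℕ) (hn : 1 ≤ n) (hk : k ≤ n) :
    (Nat.card {s : Fin k → ℤ // KNColumn n k s} : ℤ)
      = c n (k : ℤ) - c n ((k : ℤ) - 2) := by
  classical
  have key : Nat.card {s : Fin k → ℤ // KNColumn n k s} = (adm n k).card := by
    have hbij : Function.Bijective
        (fun z : {s : Fin k → ℤ // KNColumn n k s} =>
          (⟨(Pset z.1, Nset z.1), mem_adm_of_KN z.2⟩ : {x // x ∈ adm n k})) := by
      constructor
      · rintro ⟨s₁, h₁⟩ ⟨s₂, h₂⟩ h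
        simp only [Subtype.mk.injEq, Prod.mk.injEq] at h
        exact Subtype.ext (KN_inj h₁ h₂ h.1 h.2)
      · rintro ⟨⟨P, N⟩, hmem⟩
        obtain ⟨s, hKN, hPeq, hNeq⟩ := KN_surj hmem
        exact ⟨⟨s, hKN⟩, by simp [hPeq, hNeq]⟩
    rw [Nat.card_eq_of_bijective _ hbij, Nat.card_eq_fintype_card, Fintype.card_coe]
  rw [key]
  exact adm_card n k (by omega)
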